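/- Consider smooth functions x, y, z, θ : ℝ → ℝ satisfying x(t)² + y(t)² + z(t)² = 1 for all t and the ODE system x′ = −2y/(1+z²), y′ = 2x/(1+z²), z′ = 0, θ′ = 2z/(1+z²). (1) If T > 0 is such that x(T) = x(0), y(T) = y(0), z(T) = z(0) and θ(T) − θ(0) ∈ 2πℤ (i.e. the solution descends to a closed orbit of period T on S² × S¹ = S² × (ℝ/2πℤ)), then T ≥ π. (2) For every θ₀ ∈ ℝ, the curve t ↦ (cos 2t, sin 2t, 0, θ₀) is a solution that closes up with period exactly π. Hence the minimal period of closed orbits of this system is π. -/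

import Mathlib

noncomputable section

open scoped ContDiff

private lemma constFun (f : ℝ → ℝ) (h : ∀ t, HasDerivAt f 0 t) (t : ℝ) : f t = f 0 :=
  is_const_of_deriv_eq_zero (fun s => (h s).differentiableAt) (fun s => (h s).deriv) t 0

set_option maxHeartbeats 1000000

/-- The lifted Reeb flow of the standard contact form on S² × S¹:
(1) every closed orbit has period at least π;
(2) for each θ₀ the curve t ↦ (cos 2t, sin 2t, 0, θ₀) is a solution closing up
with period exactly π. Hence the minimal period of closed orbits is π. -/
theorem reeb_orbits_on_S2xS1 :
    (∀ x y z θ : ℝ → ℝ,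
      ContDiff ℝ ∞ x → ContDiff ℝ ∞ y → ContDiff ℝ ∞ z → ContDiff ℝ ∞ θ →
      (∀ t, x t ^ 2 + y t ^ 2 + z t ^ 2 = 1) →
      (∀ t, HasDerivAt x (-2 * y t / (1 + z t ^ 2)) t) →
      (∀ t, HasDerivAt y (2 * x t / (1 + z t ^ 2)) t) →
      (∀ t, HasDerivAt z 0 t) →
      (∀ t, HasDerivAt θ (2 * z t / (1 + z t ^ 2)) t) →
      ∀ T : ℝ, 0 < T →
        x T = x 0 → y T = y 0 → z T = z 0 →
        (∃ k : ℤ, θ T - θ 0 = 2 * Real.pi * k) →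
        Real.pi ≤ T) ∧
    (∀ θ₀ : ℝ, ∃ x y z θ : ℝ → ℝ,
      (∀ t, x t = Real.cos (2 * t)) ∧ (∀ t, y t = Real.sin (2 * t)) ∧
      (∀ t, z t = 0) ∧ (∀ t, θ t = θ₀) ∧
      (∀ t, x t ^ 2 + y t ^ 2 + z t ^ 2 = 1) ∧
      (∀ t, HasDerivAt x (-2 * y t / (1 + z t ^ 2)) t) ∧
      (∀ t, HasDerivAt y (2 * x t / (1 + z t ^ 2)) t) ∧
      (∀ t, HasDerivAt z 0 t) ∧
      (∀ t, HasDerivAt θ (2 * z t / (1 + z t ^ 2)) t) ∧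
      (∀ t, x (t + Real.pi) = x t ∧ y (t + Real.pi) = y t ∧ z (t + Real.pi) = z t) ∧
      (∃ k : ℤ, θ Real.pi - θ 0 = 2 * Real.pi * k)) := by
  constructor
  · intro x y z θ _ _ _ _ hsph hx' hy' hz' hθ' T hT hxT hyT hzT hk
    obtain ⟨k, hk⟩ := hk
    have pi_pos := Real.pi_pos
    set c := z 0 with hc
    have hzc : ∀ t, z t = c := constFun z hz'
    have hden : (0:ℝ) < 1 + c ^ 2 := by positivity
    set om := 2 / (1 + c ^ 2) with hom
    have hompos : 0 < om := by positivity
    -- θ is linear with slope 2c/(1+c²)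
    have hθlin : ∀ t, θ t = θ 0 + (2 * c / (1 + c ^ 2)) * t := by
      intro t
      have h : ∀ s, HasDerivAt (fun s => θ s - 2 * c / (1 + c ^ 2) * s) 0 s := by
        intro s
        have h1 := (hθ' s).sub ((hasDerivAt_id s).const_mul (2 * c / (1 + c ^ 2)))
        have h0 : 2 * z s / (1 + z s ^ 2) - 2 * c / (1 + c ^ 2) * 1 = 0 := by
          rw [hzc s]; ring
        rwa [h0] at h1
      have := constFun _ h t
      simp only [mul_zero, sub_zero] at this
      linarith
    rcases eq_or_ne (x 0 ^ 2 + y 0 ^ 2) 0 with hr | hr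
    · -- poles: c² = 1, θ moves at speed ±1
      have hc2 : c ^ 2 = 1 := by have := hsph 0; rw [← hc] at this; linarith
      have hcT : c * T = 2 * Real.pi * k := by
        have := hθlin T
        rw [hc2] at this
        have h2 : 2 * c / (1 + 1) * T = c * T := by ring
        nlinarith [hk, this]
      have hk0 : (k : ℝ) ≠ 0 := by
        intro h0
        rw [h0] at hcT
        have : c ≠ 0 := by intro h; rw [h] at hc2; norm_num at hc2
        simp at hcT
        rcases hcT with h | h
        · nlinarith
        · exact absurd h (ne_of_gt hT)
      have hk1 : 1 ≤ (k : ℝ) ^ 2 := by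
        have : k ≠ 0 := by exact_mod_cast hk0
        have h1 : 1 ≤ |k| := Int.one_le_abs this
        have : (1:ℝ) ≤ |(k:ℝ)| := by exact_mod_cast (by simpa using h1)
        nlinarith [abs_nonneg (k:ℝ), sq_abs (k:ℝ)]
      -- T² = 4π²k² ≥ 4π²
      have hT2 : T ^ 2 = 4 * Real.pi ^ 2 * (k:ℝ) ^ 2 := by
        calc T ^ 2 = c ^ 2 * T ^ 2 := by rw [hc2]; ring
          _ = (c * T) ^ 2 := by ring
          _ = (2 * Real.pi * k) ^ 2 := by rw [hcT]
          _ = 4 * Real.pi ^ 2 * (k:ℝ) ^ 2 := by ring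
      nlinarith [sq_nonneg (T - 2 * Real.pi)]
    · -- off poles: (x,y) rotates at angular speed om
      have hr' : 0 < x 0 ^ 2 + y 0 ^ 2 :=
        lt_of_le_of_ne (by positivity) (Ne.symm hr)
      have hcos : ∀ t, HasDerivAt (fun s => Real.cos (om * s)) (-Real.sin (om * t) * om) t := by
        intro t
        simpa [Function.comp_def] using (Real.hasDerivAt_cos (om * t)).comp t ((hasDerivAt_id t).const_mul om)
      have hsin : ∀ t, HasDerivAt (fun s => Real.sin (om * s)) (Real.cos (om * t) * om) t := by
        intro t
        simpa [Function.comp_def] using (Real.hasDerivAt_sin (om * t)).comp t ((hasDerivAt_id t).const_mul om)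
      have hu : ∀ t, x t * Real.cos (om * t) + y t * Real.sin (om * t) = x 0 := by
        have h : ∀ t, HasDerivAt (fun s => x s * Real.cos (om * s) + y s * Real.sin (om * s)) 0 t := by
          intro t
          have h1 := ((hx' t).mul (hcos t)).add ((hy' t).mul (hsin t))
          have h0 : -2 * y t / (1 + z t ^ 2) * Real.cos (om * t) +
              x t * (-Real.sin (om * t) * om) +
              (2 * x t / (1 + z t ^ 2) * Real.sin (om * t) + y t * (Real.cos (om * t) * om)) = 0 := by
            rw [hzc t, hom]; field_simp; ring
          rwa [h0] at h1
        intro t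
        have := constFun _ h t
        simpa using this
      have hv : ∀ t, -(x t) * Real.sin (om * t) + y t * Real.cos (om * t) = y 0 := by
        have h : ∀ t, HasDerivAt (fun s => -(x s) * Real.sin (om * s) + y s * Real.cos (om * s)) 0 t := by
          intro t
          have h1 := (((hx' t).neg).mul (hsin t)).add ((hy' t).mul (hcos t))
          have h0 : -(-2 * y t / (1 + z t ^ 2)) * Real.sin (om * t) +
              -(x t) * (Real.cos (om * t) * om) +
              (2 * x t / (1 + z t ^ 2) * Real.cos (om * t) + y t * (-Real.sin (om * t) * om)) = 0 := by
            rw [hzc t, hom]; field_simp; ring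
          simp only [Pi.neg_apply] at h1
          rwa [h0] at h1
        intro t
        have := constFun _ h t
        simpa using this
      -- closing condition forces cos(omT) = 1
      have hpyth : Real.sin (om * T) ^ 2 + Real.cos (om * T) ^ 2 = 1 :=
        Real.sin_sq_add_cos_sq _
      have huT := hu T
      have hvT := hv T
      rw [hxT, hyT] at huT hvT
      have hC : Real.cos (om * T) = 1 := by
        have h1 : (x 0 ^ 2 + y 0 ^ 2) * (Real.cos (om * T) - 1) = 0 := by
          linear_combination x 0 * huT + y 0 * hvT
        rcases mul_eq_zero.mp h1 with h | h
        · exact absurd h hr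
        · linarith
      obtain ⟨n, hn⟩ := (Real.cos_eq_one_iff (om * T)).mp hC
      have hnpos : (1:ℝ) ≤ (n:ℝ) := by
        have h1 : 0 < (n:ℝ) * (2 * Real.pi) := by rw [hn]; positivity
        have h2 : 0 < (n:ℝ) := by nlinarith
        have : 0 < n := by exact_mod_cast h2
        exact_mod_cast this
      -- T = n π (1 + c²) ≥ π
      have hTeq : T = (n:ℝ) * Real.pi * (1 + c ^ 2) := by
        rw [hom] at hn
        field_simp at hn
        linear_combination -hn
      rw [hTeq]
      have h1 : Real.pi ≤ (n:ℝ) * Real.pi := le_mul_of_one_le_left pi_pos.le hnpos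
      have h2 : (n:ℝ) * Real.pi ≤ (n:ℝ) * Real.pi * (1 + c ^ 2) := by
        have hn0 : 0 < (n:ℝ) * Real.pi := by nlinarith
        nlinarith [sq_nonneg c]
      linarith
  · intro θ₀
    refine ⟨fun t => Real.cos (2 * t), fun t => Real.sin (2 * t), fun _ => 0, fun _ => θ₀,
      fun _ => rfl, fun _ => rfl, fun _ => rfl, fun _ => rfl, ?_, ?_, ?_, ?_, ?_, ?_, ⟨0, by simp⟩⟩
    · intro t
      show Real.cos (2 * t) ^ 2 + Real.sin (2 * t) ^ 2 + (0:ℝ) ^ 2 = 1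
      nlinarith [Real.sin_sq_add_cos_sq (2 * t)]
    · intro t
      have h : HasDerivAt (fun s => Real.cos (2 * s)) (-Real.sin (2 * t) * 2) t := by
        simpa [Function.comp_def] using (Real.hasDerivAt_cos (2 * t)).comp t ((hasDerivAt_id t).const_mul 2)
      have h0 : -2 * Real.sin (2 * t) / (1 + (0:ℝ) ^ 2) = -Real.sin (2 * t) * 2 := by
        norm_num; ring
      show HasDerivAt (fun s => Real.cos (2 * s)) (-2 * Real.sin (2 * t) / (1 + (0:ℝ) ^ 2)) t
      rw [h0]; exact h
    · intro t
      have h : HasDerivAt (fun s => Real.sin (2 * s)) (Real.cos (2 * t) * 2) t := by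
        simpa [Function.comp_def] using (Real.hasDerivAt_sin (2 * t)).comp t ((hasDerivAt_id t).const_mul 2)
      have h0 : 2 * Real.cos (2 * t) / (1 + (0:ℝ) ^ 2) = Real.cos (2 * t) * 2 := by
        norm_num; ring
      show HasDerivAt (fun s => Real.sin (2 * s)) (2 * Real.cos (2 * t) / (1 + (0:ℝ) ^ 2)) t
      rw [h0]; exact h
    · intro t; exact hasDerivAt_const t 0
    · intro t
      have h0 : 2 * (0:ℝ) / (1 + (0:ℝ) ^ 2) = 0 := by norm_num
      show HasDerivAt (fun _ => θ₀) (2 * (0:ℝ) / (1 + (0:ℝ) ^ 2)) t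
      rw [h0]; exact hasDerivAt_const t θ₀
    · intro t
      have h : 2 * (t + Real.pi) = 2 * t + 2 * Real.pi := by ring
      refine ⟨?_, ?_, rfl⟩
      · show Real.cos (2 * (t + Real.pi)) = Real.cos (2 * t)
        rw [h]; exact Real.cos_add_two_pi (2 * t)
      · show Real.sin (2 * (t + Real.pi)) = Real.sin (2 * t)
        rw [h]; exact Real.sin_add_two_pi (2 * t)
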